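/- arXiv:2309.10887 — 3 statements merged into one kernel-verified Lean document; each statement's English description precedes it below -/
import Mathlib

section
/- For M a positive integer and θ ∈ [0, π/2] with sin(2θ) ≠ 0, define p_s(θ) = 1/2 - sin(4Mθ)/(4M·sin(2θ)). If sin(θ) ∈ [√ε, 1/√2] and M ≥ 2/√ε, then p_s(θ) ≥ 1/4. -/
open Real

theorem grover_success_prob_small_angle
    (ε : ℝ) (hε : 0 < ε) (M : ℕ) (hM : 1 ≤ M) (θ : ℝ)
    (hθ0 : 0 ≤ θ) (hθ1 : θ ≤ π / 2)
    (hsin2 : Real.sin (2 * θ) ≠ 0)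
    (hlow : Real.sqrt ε ≤ Real.sin θ)
    (hhigh : Real.sin θ ≤ 1 / Real.sqrt 2)
    (hMε : (M : ℝ) ≥ 2 / Real.sqrt ε) :
    1 / 2 - Real.sin (4 * M * θ) / (4 * M * Real.sin (2 * θ)) ≥ 1 / 4 := by
  have hsε : 0 < Real.sqrt ε := Real.sqrt_pos.mpr hε
  have hs2 : (0:ℝ) < Real.sqrt 2 := by positivity
  have hcos0 : 0 ≤ Real.cos θ :=
    Real.cos_nonneg_of_mem_Icc ⟨by linarith [Real.pi_pos], hθ1⟩
  have hsin0 : 0 < Real.sin θ := lt_of_lt_of_le hsε hlow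
  have hcos : 1 / Real.sqrt 2 ≤ Real.cos θ := by
    have h1 : Real.sin θ ^ 2 ≤ 1 / 2 := by
      have := mul_le_mul hhigh hhigh (le_of_lt hsin0) (by positivity)
      have h2 : (1 / Real.sqrt 2) * (1 / Real.sqrt 2) = 1 / 2 := by
        rw [div_mul_div_comm, one_mul, Real.mul_self_sqrt (by norm_num)]
      nlinarith
    have hc2 : 1 / 2 ≤ Real.cos θ ^ 2 := by
      have := Real.sin_sq_add_cos_sq θ
      nlinarith
    have h12 : (1 / Real.sqrt 2) ^ 2 = 1 / 2 := by
      rw [div_pow, one_pow, Real.sq_sqrt (by norm_num)]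
    nlinarith [sq_nonneg (Real.cos θ - 1 / Real.sqrt 2)]
  have h2θ : Real.sin (2 * θ) = 2 * Real.sin θ * Real.cos θ := Real.sin_two_mul θ
  have hMε' : 2 ≤ (M : ℝ) * Real.sqrt ε := by
    have := (div_le_iff₀ hsε).mp hMε
    linarith
  have hM1 : (1:ℝ) ≤ (M:ℝ) := by exact_mod_cast hM
  have hs2le : Real.sqrt 2 ≤ 2 := by
    nlinarith [Real.sq_sqrt (show (0:ℝ) ≤ 2 by norm_num), hs2]
  have hstep : Real.sqrt ε * (1 / Real.sqrt 2) ≤ Real.sin θ * Real.cos θ :=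
    mul_le_mul hlow hcos (by positivity) (le_of_lt hsin0)
  have hsε2 : Real.sqrt ε ≤ Real.sqrt 2 * (Real.sin θ * Real.cos θ) := by
    have key : Real.sqrt 2 * (Real.sqrt ε * (1 / Real.sqrt 2)) = Real.sqrt ε := by
      field_simp
    linarith [mul_le_mul_of_nonneg_left hstep (le_of_lt hs2), key]
  have hD : (4:ℝ) ≤ 4 * M * Real.sin (2 * θ) := by
    have hscpos : 0 ≤ Real.sin θ * Real.cos θ := mul_nonneg (le_of_lt hsin0) hcos0
    have h1 : Real.sqrt ε ≤ 2 * (Real.sin θ * Real.cos θ) := by nlinarith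
    have h2 : 2 ≤ (M:ℝ) * (2 * (Real.sin θ * Real.cos θ)) := by nlinarith
    rw [h2θ]; nlinarith
  have hDpos : (0:ℝ) < 4 * M * Real.sin (2 * θ) := by linarith
  have hfrac : Real.sin (4 * M * θ) / (4 * M * Real.sin (2 * θ)) ≤ 1 / 4 := by
    rw [div_le_iff₀ hDpos]
    have := Real.sin_le_one (4 * M * θ)
    nlinarith
  linarith
end

section
/- Let M ≥ 1 be an integer and θ ∈ [π/4, (1/2 - 1/(4M))π]. Then 1/2 - sin(4Mθ)/(4M·sin(2θ)) ≥ 1/2 - 4/π² > 0.09. -/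
open Real

theorem grover_success_prob_mid_angle
    (M : ℕ) (hM : 1 ≤ M) (θ : ℝ)
    (h1 : π / 4 ≤ θ) (h2 : θ ≤ (1 / 2 - 1 / (4 * M)) * π) :
    1 / 2 - Real.sin (4 * M * θ) / (4 * M * Real.sin (2 * θ)) ≥ 1 / 2 - 4 / π ^ 2
      ∧ (1 : ℝ) / 2 - 4 / π ^ 2 > 0.09 := by
  have hpi := Real.pi_gt_d6
  have hpi4 := Real.pi_lt_d2
  have hm : (1 : ℝ) ≤ (M : ℝ) := by exact_mod_cast hM
  have hmpos : (0 : ℝ) < (M : ℝ) := by linarith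
  -- bounds on π - 2θ
  have hub : π - 2 * θ ≤ π / 2 := by linarith
  have hlb : π / (2 * M) ≤ π - 2 * θ := by
    have : θ ≤ (1 / 2 - 1 / (4 * (M : ℝ))) * π := h2
    have h4 : (0:ℝ) < 4 * (M:ℝ) := by positivity
    rw [div_le_iff₀ (by positivity)]
    have key : 1 / (4 * (M:ℝ)) * π ≤ π / 2 - θ := by nlinarith
    have hk := mul_le_mul_of_nonneg_right key (le_of_lt h4)
    have : 1 / (4 * (M:ℝ)) * π * (4 * M) = π := by field_simp
    nlinarith
  have hlb0 : (0 : ℝ) < π / (2 * M) := by positivity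
  have hsin : 1 / (M : ℝ) ≤ Real.sin (2 * θ) := by
    have h := Real.mul_le_sin (x := π - 2 * θ) (by linarith) hub
    rw [Real.sin_pi_sub] at h
    have : 2 / π * (π / (2 * M)) ≤ 2 / π * (π - 2 * θ) := by
      apply mul_le_mul_of_nonneg_left hlb (by positivity)
    have heq : 2 / π * (π / (2 * M)) = 1 / (M : ℝ) := by
      field_simp
    linarith [heq ▸ this]
  have hspos : (0 : ℝ) < Real.sin (2 * θ) := lt_of_lt_of_le (by positivity) hsin
  have hdenpos : (0 : ℝ) < 4 * (M : ℝ) * Real.sin (2 * θ) := by positivity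
  have hfrac : Real.sin (4 * M * θ) / (4 * M * Real.sin (2 * θ)) ≤ 1 / 4 := by
    rw [div_le_iff₀ hdenpos]
    have h1' : Real.sin (4 * M * θ) ≤ 1 := Real.sin_le_one _
    have : (4 : ℝ) * M * (1 / M) ≤ 4 * M * Real.sin (2 * θ) := by
      apply mul_le_mul_of_nonneg_left hsin (by positivity)
    have h2' : (4 : ℝ) * M * (1 / M) = 4 := by field_simp
    nlinarith
  constructor
  · have h14 : (1 : ℝ) / 4 ≤ 4 / π ^ 2 := by
      rw [le_div_iff₀ (by positivity)]
      nlinarith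
    linarith
  · have : 4 / π ^ 2 < 0.41 := by
      rw [div_lt_iff₀ (by positivity)]
      nlinarith
    norm_num at this ⊢
    linarith
end

section
/- Let C be a concept class on a finite set X (a set of functions X → {0,1}) with VC dimension d. Then 2^d ≤ |C| ≤ |X|^d + 1. -/
open Finset

/-- `C` shatters `Y` if every labelling of `Y` is realised by some concept in `C`. -/
def Shatters {X : Type*} [DecidableEq X] (C : Finset (X → Bool)) (Y : Finset X) : Prop :=
  ∀ ℓ : X → Bool, ∃ c ∈ C, ∀ y ∈ Y, c y = ℓ y

private lemma Iic_eq_range (d : ℕ) : Iic d = range (d + 1) := by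
  ext k; simp [Nat.lt_succ_iff]

private lemma choose_step {n d : ℕ} (hd : 1 ≤ d) :
    n ^ d + n.choose (d + 1) ≤ n ^ (d + 1) := by
  rcases Nat.eq_zero_or_pos n with rfl | hn
  · simp [Nat.zero_pow (by omega : 0 < d), Nat.zero_pow (by omega : 0 < d + 1),
      Nat.choose_eq_zero_of_lt (Nat.succ_pos d)]
  · have h1 : n.choose (d + 1) ≤ n.choose (d + 1) * (d + 1) :=
      Nat.le_mul_of_pos_right _ (Nat.succ_pos d)
    have h2 : n.choose (d + 1) * (d + 1) = n.choose d * (n - d) :=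
      Nat.choose_succ_right_eq n d
    have h3 : n.choose d * (n - d) ≤ n ^ d * (n - 1) :=
      Nat.mul_le_mul (Nat.choose_le_pow n d) (show n - d ≤ n - 1 by omega)
    have h4 : n ^ d + n ^ d * (n - 1) = n ^ (d + 1) := by
      have h5 : 1 + (n - 1) = n := by omega
      calc n ^ d + n ^ d * (n - 1) = n ^ d * (1 + (n - 1)) := by ring
        _ = n ^ d * n := by rw [h5]
        _ = n ^ (d + 1) := by ring
    omega

private lemma sum_choose_le (n d : ℕ) :
    ∑ k ∈ Iic d, n.choose k ≤ n ^ d + 1 := by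
  rw [Iic_eq_range]
  rcases Nat.eq_zero_or_pos d with rfl | hd
  · simp
  · induction d, hd using Nat.le_induction with
    | base => simp [Finset.sum_range_succ, Nat.add_comm]
    | succ d hd ih =>
      rw [Finset.sum_range_succ]
      have := choose_step (n := n) hd
      omega

theorem vc_card_bounds
    {X : Type*} [Fintype X] [DecidableEq X]
    (C : Finset (X → Bool)) (hC : C.Nonempty) (d : ℕ)
    (hshat : ∃ Y : Finset X, Y.card = d ∧ Shatters C Y)
    (hmax : ∀ Y : Finset X, Shatters C Y → Y.card ≤ d) :
    2 ^ d ≤ C.card ∧ C.card ≤ (Fintype.card X) ^ d + 1 := by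
  constructor
  · -- lower bound
    obtain ⟨Y, hYd, hY⟩ := hshat
    choose f hfC hf using fun S : Finset X => hY (fun x => decide (x ∈ S))
    have hinj : Set.InjOn f Y.powerset := by
      intro S hS T hT h
      rw [Finset.coe_powerset, Set.mem_preimage, Set.mem_powerset_iff] at hS hT
      ext a
      constructor
      · intro haS
        have haY : a ∈ Y := hS haS
        have h1 := hf S a haY
        have h2 := hf T a haY
        rw [h] at h1
        rw [h1] at h2
        simpa [haS] using h2.symm
      · intro haT
        have haY : a ∈ Y := hT haT
        have h1 := hf S a haY
        have h2 := hf T a haY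
        rw [h] at h1
        rw [h1] at h2
        simpa [haT] using h2
    calc 2 ^ d = Y.powerset.card := by rw [card_powerset, hYd]
      _ ≤ C.card := Finset.card_le_card_of_injOn f (fun S _ => hfC S) hinj
  · -- upper bound
    set 𝒜 : Finset (Finset X) := C.image (fun c => univ.filter fun x => c x = true) with h𝒜
    have hcardA : 𝒜.card = C.card := by
      rw [h𝒜]
      apply Finset.card_image_of_injOn
      intro c _ c' _ h
      funext x
      have := Finset.ext_iff.1 h x
      simp only [Finset.mem_filter, Finset.mem_univ, true_and] at this
      cases hc : c x <;> cases hc' : c' x <;> simp_all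
    have hconv : ∀ s : Finset X, 𝒜.Shatters s → Shatters C s := by
      intro s hs ℓ
      obtain ⟨u, hu, hsu⟩ := hs (Finset.filter_subset (fun y => ℓ y = true) s)
      rw [h𝒜, Finset.mem_image] at hu
      obtain ⟨c, hcC, rfl⟩ := hu
      refine ⟨c, hcC, fun y hy => ?_⟩
      have := Finset.ext_iff.1 hsu y
      simp only [Finset.mem_inter, Finset.mem_filter, Finset.mem_univ, true_and] at this
      cases hc : c y <;> cases hl : ℓ y <;> simp_all
    have hbound : ∀ s ∈ 𝒜.shatterer, s.card ≤ d := fun s hs =>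
      hmax s (hconv s (Finset.mem_shatterer.1 hs))
    have hS : 𝒜.shatterer.card ≤ ∑ k ∈ Iic d, (Fintype.card X).choose k := by
      simp_rw [← Finset.card_univ, ← Finset.card_powersetCard]
      refine (Finset.card_le_card fun s hs => Finset.mem_biUnion.2
        ⟨s.card, Finset.mem_Iic.2 (hbound s hs), Finset.mem_powersetCard_univ.2 rfl⟩).trans
        Finset.card_biUnion_le
    calc C.card = 𝒜.card := hcardA.symm
      _ ≤ 𝒜.shatterer.card := Finset.card_le_card_shatterer 𝒜
      _ ≤ ∑ k ∈ Iic d, (Fintype.card X).choose k := hS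
      _ ≤ (Fintype.card X) ^ d + 1 := sum_choose_le _ _
end
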